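/- Let f ∈ S_{m,L} with 0 < m < L and unique global minimizer x*. For α = 2/L, the gradient descent iterates x(k+1) = x(k) - α∇f(x(k)) satisfy ∑_{k=0}^{∞} ‖x(k) - x* - (α/2)∇f(x(k))‖² < ∞; in particular x(k) - (1/L)∇f(x(k)) → x* as k → ∞. -/
import Mathlib


open scoped RealInnerProductSpace
open Filter

/-- At the boundary step size `α = 2/L` (with `m < L`), the shifted output
`x(k) - x* - (α/2)∇f(x(k))` of gradient descent is square-summable; in particular
`x(k) - (1/L)∇f(x(k)) → x*`. -/
theorem stmt_12 {n : ℕ} (f : EuclideanSpace ℝ (Fin n) → ℝ) (m L : ℝ)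
    (hm : 0 < m) (hmL : m < L)
    (hf : ContDiff ℝ 1 f)
    (xs : EuclideanSpace ℝ (Fin n))
    (hmin : ∀ x, f xs ≤ f x)
    (huniq : ∀ y, (∀ x, f y ≤ f x) → y = xs)
    (hgrad0 : gradient f xs = 0)
    (hsector : ∀ x, ⟪x - xs, gradient f x⟫ ≥
      m * L / (m + L) * ‖x - xs‖ ^ 2 + 1 / (m + L) * ‖gradient f x‖ ^ 2)
    (α : ℝ) (hα : α = 2 / L)
    (x : ℕ → EuclideanSpace ℝ (Fin n))
    (hupd : ∀ k, x (k + 1) = x k - α • gradient f (x k)) :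
    Summable (fun k => ‖x k - xs - (α / 2) • gradient f (x k)‖ ^ 2) ∧
    Tendsto (fun k => x k - (1 / L) • gradient f (x k)) atTop (nhds xs) := by
  have hL : (0:ℝ) < L := hm.trans hmL
  have hmL0 : (0:ℝ) < m + L := by linarith
  set c : ℝ := (L - m) / (4 * m) with hc
  have hc0 : 0 ≤ c := div_nonneg (by linarith) (by linarith)
  set T : ℕ → ℝ := fun k => ‖x k - xs - (α / 2) • gradient f (x k)‖ ^ 2 with hT
  set V : ℕ → ℝ := fun k => ‖x k - xs‖ ^ 2 with hV
  -- expansion lemma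
  have expand : ∀ (v g : EuclideanSpace ℝ (Fin n)) (t : ℝ),
      ‖v - t • g‖ ^ 2 = ‖v‖ ^ 2 - 2 * t * ⟪v, g⟫ + t ^ 2 * ‖g‖ ^ 2 := by
    intro v g t
    rw [norm_sub_sq_real, real_inner_smul_right, norm_smul]
    simp [mul_pow]
    ring
  have key : ∀ k, T k ≤ c * (V k - V (k + 1)) := by
    intro k
    have hVk1 : V (k + 1) = V k - 2 * α * ⟪x k - xs, gradient f (x k)⟫
        + α ^ 2 * ‖gradient f (x k)‖ ^ 2 := by
      simp only [hV, hupd k, sub_right_comm (x k) (α • gradient f (x k)) xs]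
      exact expand _ _ _
    have hTk : T k = V k - 2 * (α / 2) * ⟪x k - xs, gradient f (x k)⟫
        + (α / 2) ^ 2 * ‖gradient f (x k)‖ ^ 2 := expand _ _ _
    have hs := hsector (x k)
    have hg : (0:ℝ) ≤ ‖gradient f (x k)‖ ^ 2 := by positivity
    have hv : (0:ℝ) ≤ ‖x k - xs‖ ^ 2 := by positivity
    rw [hTk, hVk1, hα, hc]
    have hVkdef : V k = ‖x k - xs‖ ^ 2 := rfl
    rw [hVkdef]
    set A := ‖x k - xs‖ ^ 2
    set B := ‖gradient f (x k)‖ ^ 2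
    set S := ⟪x k - xs, gradient f (x k)⟫
    have hS : S ≥ m * L / (m + L) * A + 1 / (m + L) * B := hs
    have h1 : m * L * A + B ≤ S * (m + L) := by
      calc m * L * A + B = (m * L / (m + L) * A + 1 / (m + L) * B) * (m + L) := by
            field_simp
        _ ≤ S * (m + L) := mul_le_mul_of_nonneg_right hS hmL0.le
    rw [← sub_nonneg]
    have hLne : L ≠ 0 := ne_of_gt hL
    have hmne : m ≠ 0 := ne_of_gt hm
    have key2 : (L - m) / (4 * m) * (A - (A - 2 * (2 / L) * S + (2 / L) ^ 2 * B))
        - (A - 2 * (2 / L / 2) * S + (2 / L / 2) ^ 2 * B)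
        = (S * (m + L) - (m * L * A + B)) / (m * L) := by
      field_simp
      ring
    rw [key2]
    exact div_nonneg (by linarith) (by positivity)
  have hTnn : ∀ k, 0 ≤ T k := fun k => by positivity
  have hsum : Summable T := by
    apply summable_of_sum_range_le hTnn (c := c * V 0)
    intro N
    have htel : ∑ k ∈ Finset.range N, (V k - V (k + 1)) = V 0 - V N :=
      Finset.sum_range_sub' V N
    have h1 : ∑ k ∈ Finset.range N, T k ≤ ∑ k ∈ Finset.range N, c * (V k - V (k + 1)) :=
      Finset.sum_le_sum fun k _ => key k
    rw [← Finset.mul_sum, htel] at h1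
    have hVN : 0 ≤ V N := by positivity
    nlinarith [h1]
  refine ⟨hsum, ?_⟩
  have hT0 : Tendsto T atTop (nhds 0) := hsum.tendsto_atTop_zero
  have hnorm0 : Tendsto (fun k => ‖x k - xs - (α / 2) • gradient f (x k)‖) atTop (nhds 0) := by
    have h2 := (Real.continuous_sqrt.tendsto 0).comp hT0
    simp only [Function.comp_def, hT, Real.sqrt_sq (norm_nonneg _), Real.sqrt_zero] at h2
    exact h2
  rw [tendsto_iff_norm_sub_tendsto_zero]
  have hα2 : α / 2 = 1 / L := by rw [hα]; ring
  convert hnorm0 using 2 with k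
  rw [← hα2]
  abel_nf
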